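/- Let A be a finite multiset of nonnegative reals, z > 0 with z ≥ y for all y ∈ A, and let x ≥ 0 satisfy x ≤ z + ∑_{y∈A} y. Then there exists a subset Q ⊆ A and a real z_d with 0 ≤ z_d ≤ z such that z_d + ∑_{y∈Q} y = x. -/
import Mathlib


open Finset

/-- Majorization via prefix sums (vectors as functions ℕ → ℝ, padded with zeros). -/
def Maj (p q : ℕ → ℝ) : Prop :=
  ∀ i : ℕ, ∑ k ∈ Finset.range i, p k ≤ ∑ k ∈ Finset.range i, q k

/-- A probability vector of length `n`, sorted non-increasingly, zero beyond `n`. -/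
def IsProbVec (n : ℕ) (p : ℕ → ℝ) : Prop :=
  (∀ i, 0 ≤ p i) ∧ (∀ i j : ℕ, i ≤ j → p j ≤ p i) ∧
  (∑ k ∈ Finset.range n, p k = 1) ∧ (∀ i, n ≤ i → p i = 0)

/-- The greatest lower bound `p ∧ q` in the majorization lattice. -/
noncomputable def meet (p q : ℕ → ℝ) : ℕ → ℝ := fun i =>
  min (∑ k ∈ Finset.range (i + 1), p k) (∑ k ∈ Finset.range (i + 1), q k) -
  min (∑ k ∈ Finset.range i, p k) (∑ k ∈ Finset.range i, q k)

/-- Shannon entropy (base 2) of the first `n` components. -/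
noncomputable def H2 (n : ℕ) (p : ℕ → ℝ) : ℝ :=
  ∑ k ∈ Finset.range n, -(p k * Real.logb 2 (p k))

/-- Shannon entropy (base 2) of the entries of an `n × m` matrix. -/
noncomputable def Hmat (n m : ℕ) (M : ℕ → ℕ → ℝ) : ℝ :=
  ∑ i ∈ Finset.range n, ∑ j ∈ Finset.range m, -(M i j * Real.logb 2 (M i j))

/-- `M` is a coupling of `p` and `q`: nonnegative, row sums `p`, column sums `q`. -/
def IsCoupling (n m : ℕ) (p q : ℕ → ℝ) (M : ℕ → ℕ → ℝ) : Prop :=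
  (∀ i j, 0 ≤ M i j) ∧ (∀ i < n, ∑ j ∈ Finset.range m, M i j = p i) ∧
  (∀ j < m, ∑ i ∈ Finset.range n, M i j = q j)

/-- The `half` operator: duplicates and halves each component. -/
noncomputable def half (p : ℕ → ℝ) : ℕ → ℝ := fun i => p (i / 2) / 2

/-- Iterated `half` operator. -/
noncomputable def halfIter : ℕ → (ℕ → ℝ) → (ℕ → ℝ)
  | 0, p => p
  | (i + 1), p => half (halfIter i p)

/-- Iterated majorization meet of `p 0, p 1, …, p k`. -/
noncomputable def bigMeet (p : ℕ → ℕ → ℝ) : ℕ → (ℕ → ℝ)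
  | 0 => p 0
  | (k + 1) => meet (bigMeet p k) (p (k + 1))

theorem stmt6 (A : Multiset ℝ) (hA : ∀ y ∈ A, 0 ≤ y) (z : ℝ) (hz : 0 < z)
    (hdom : ∀ y ∈ A, y ≤ z) (x : ℝ) (hx : 0 ≤ x) (hxz : x ≤ z + A.sum) :
    ∃ Q : Multiset ℝ, Q ≤ A ∧ ∃ zd : ℝ, 0 ≤ zd ∧ zd ≤ z ∧ zd + Q.sum = x := by
  induction A using Multiset.induction generalizing x with
  | empty =>
    exact ⟨0, le_refl _, x, hx, by simpa using hxz, by simp⟩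
  | cons a s ih =>
    by_cases hle : x ≤ z
    · exact ⟨0, Multiset.zero_le _, x, hx, hle, by simp⟩
    · push_neg at hle
      have ha : a ≤ z := hdom a (by simp)
      have ha0 : 0 ≤ a := hA a (by simp)
      have hxz' : x - a ≤ z + s.sum := by
        simp only [Multiset.sum_cons] at hxz; linarith
      obtain ⟨Q, hQ, zd, h0, hz', hsum⟩ :=
        ih (fun y hy => hA y (by simp [hy])) (fun y hy => hdom y (by simp [hy]))
          (x - a) (by linarith) hxz'
      exact ⟨a ::ₘ Q, Multiset.cons_le_cons a hQ, zd, h0, hz', by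
        simp only [Multiset.sum_cons]; linarith⟩
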